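/- The set of little-oh polynomials is a subring of the ring of bounded real sequences: every little-oh polynomial is a bounded sequence, every constant sequence is a little-oh polynomial, and the set of little-oh polynomials is closed under pointwise addition, negation, and multiplication. -/

import Mathlib

open Filter

/-- The set of real sequences `f` with `n · f n → 0`. -/
def littleO : Set (ℕ → ℝ) :=
  {f : ℕ → ℝ | Filter.Tendsto (fun n : ℕ => (n : ℝ) * f n) Filter.atTop (nhds 0)}

/-- A sequence is a little-oh polynomial iff it differs from
`r + ∑ i, αᵢ · n^(-aᵢ)` (with all `aᵢ ≥ 0`) by an element of `littleO`. -/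
def LittleOhPoly (x : ℕ → ℝ) : Prop :=
  ∃ (k : ℕ) (r : ℝ) (α a : Fin k → ℝ), (∀ i, 0 ≤ a i) ∧
    (fun n : ℕ => x n - r - ∑ i, α i * (n : ℝ) ^ (-(a i))) ∈ littleO

/-- Pure polynomial-form sequences. -/
def PolyForm (p : ℕ → ℝ) : Prop :=
  ∃ (k : ℕ) (α a : Fin k → ℝ), (∀ i, 0 ≤ a i) ∧
    p = fun n : ℕ => ∑ i, α i * (n : ℝ) ^ (-(a i))

lemma littleO_congr {f g : ℕ → ℝ} (h : ∀ n ≥ 1, f n = g n) (hf : f ∈ littleO) :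
    g ∈ littleO := by
  refine hf.congr' ?_
  filter_upwards [eventually_ge_atTop 1] with n hn
  rw [h n hn]

lemma littleO_add {f g : ℕ → ℝ} (hf : f ∈ littleO) (hg : g ∈ littleO) :
    (fun n => f n + g n) ∈ littleO := by
  show Filter.Tendsto _ _ _
  have h := hf.add hg
  rw [add_zero] at h
  exact h.congr fun n => by ring

lemma littleO_neg {f : ℕ → ℝ} (hf : f ∈ littleO) : (fun n => -f n) ∈ littleO := by
  show Filter.Tendsto _ _ _
  have h := hf.neg
  rw [neg_zero] at h
  exact h.congr fun n => by ring

lemma littleO_bdd_mul {c f : ℕ → ℝ} {C : ℝ} (hc : ∀ n, |c n| ≤ C)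
    (hf : f ∈ littleO) : (fun n => c n * f n) ∈ littleO := by
  have h : Filter.Tendsto (fun n : ℕ => C * |(n : ℝ) * f n|) atTop (nhds 0) := by
    have := (hf.abs).const_mul C
    simpa using this
  refine squeeze_zero_norm (fun n => ?_) h
  have h1 : |(n:ℝ) * (c n * f n)| = |c n| * |(n:ℝ) * f n| := by
    rw [← abs_mul]; ring_nf
  rw [Real.norm_eq_abs, h1]
  exact mul_le_mul_of_nonneg_right (hc n) (abs_nonneg _)

lemma tendsto_of_littleO {f : ℕ → ℝ} (hf : f ∈ littleO) :
    Filter.Tendsto f atTop (nhds 0) := by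
  refine squeeze_zero_norm' ?_ (by simpa using hf.abs)
  filter_upwards [eventually_ge_atTop 1] with n hn
  rw [Real.norm_eq_abs, ← Nat.abs_cast]
  have h1 : (1:ℝ) ≤ |(n:ℝ)| := by
    rw [abs_of_nonneg (by positivity)]
    exact_mod_cast hn
  nlinarith [abs_nonneg (f n)]

lemma bdd_of_tendsto {f : ℕ → ℝ} (hf : Filter.Tendsto f atTop (nhds 0)) :
    ∃ C : ℝ, ∀ n, |f n| ≤ C := by
  have h := Metric.tendsto_atTop.1 hf 1 one_pos
  obtain ⟨N, hN⟩ := h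
  refine ⟨1 + ∑ m ∈ Finset.range N, |f m|, fun n => ?_⟩
  rcases lt_or_ge n N with hn | hn
  · have h1 : |f n| ≤ ∑ m ∈ Finset.range N, |f m| :=
      Finset.single_le_sum (f := fun m => |f m|) (fun m _ => abs_nonneg _)
        (Finset.mem_range.2 hn)
    have h2 : (0:ℝ) ≤ 1 := zero_le_one
    linarith
  · have := hN n hn
    rw [Real.dist_eq, sub_zero] at this
    have h1 : (0:ℝ) ≤ ∑ m ∈ Finset.range N, |f m| :=
      Finset.sum_nonneg fun m _ => abs_nonneg _
    linarith

lemma bdd_of_littleO {f : ℕ → ℝ} (hf : f ∈ littleO) : ∃ C : ℝ, ∀ n, |f n| ≤ C :=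
  bdd_of_tendsto (tendsto_of_littleO hf)

lemma rpow_neg_le_one {a : ℝ} (ha : 0 ≤ a) (n : ℕ) : |(n : ℝ) ^ (-a)| ≤ 1 := by
  rw [abs_of_nonneg (Real.rpow_nonneg (by positivity) _)]
  rcases Nat.eq_zero_or_pos n with hn | hn
  · subst hn
    simpa using Real.zero_rpow_le_one (-a)
  · exact Real.rpow_le_one_of_one_le_of_nonpos (by exact_mod_cast hn) (by linarith)

lemma polyForm_bdd {p : ℕ → ℝ} (hp : PolyForm p) : ∃ C : ℝ, ∀ n, |p n| ≤ C := by
  obtain ⟨k, α, a, ha, rfl⟩ := hp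
  refine ⟨∑ i, |α i|, fun n => ?_⟩
  calc |∑ i, α i * (n : ℝ) ^ (-(a i))| ≤ ∑ i, |α i * (n : ℝ) ^ (-(a i))| :=
        Finset.abs_sum_le_sum_abs _ _
    _ ≤ ∑ i, |α i| := by
        refine Finset.sum_le_sum fun i _ => ?_
        rw [abs_mul]
        calc |α i| * |(n : ℝ) ^ (-(a i))| ≤ |α i| * 1 :=
              mul_le_mul_of_nonneg_left (rpow_neg_le_one (ha i) n) (abs_nonneg _)
          _ = |α i| := mul_one _

lemma polyForm_const (r : ℝ) : PolyForm (fun _ => r) := by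
  refine ⟨1, fun _ => r, fun _ => 0, fun _ => le_refl 0, ?_⟩
  funext n
  simp

lemma polyForm_add {p q : ℕ → ℝ} (hp : PolyForm p) (hq : PolyForm q) :
    PolyForm (fun n => p n + q n) := by
  obtain ⟨k, α, a, ha, rfl⟩ := hp
  obtain ⟨l, β, b, hb, rfl⟩ := hq
  refine ⟨k + l, Fin.append α β, Fin.append a b, ?_, ?_⟩
  · intro i
    refine Fin.addCases (fun i => ?_) (fun i => ?_) i
    · simpa using ha i
    · simpa using hb i
  · funext n
    rw [Fin.sum_univ_add]
    simp [Fin.append_left, Fin.append_right]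

lemma polyForm_neg {p : ℕ → ℝ} (hp : PolyForm p) : PolyForm (fun n => -p n) := by
  obtain ⟨k, α, a, ha, rfl⟩ := hp
  refine ⟨k, fun i => -α i, a, ha, ?_⟩
  funext n
  simp [Finset.sum_neg_distrib, neg_mul]

lemma polyForm_mul {p q : ℕ → ℝ} (hp : PolyForm p) (hq : PolyForm q) :
    ∃ w, PolyForm w ∧ ∀ n ≥ 1, p n * q n = w n := by
  obtain ⟨k, α, a, ha, rfl⟩ := hp
  obtain ⟨l, β, b, hb, rfl⟩ := hq
  set e := (finProdFinEquiv : Fin k × Fin l ≃ Fin (k * l)) with he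
  set α' : Fin (k * l) → ℝ := fun m => α (e.symm m).1 * β (e.symm m).2 with hα'
  set a' : Fin (k * l) → ℝ := fun m => a (e.symm m).1 + b (e.symm m).2 with ha'
  refine ⟨fun n => ∑ m, α' m * (n : ℝ) ^ (-(a' m)),
    ⟨k * l, α', a', fun m => add_nonneg (ha _) (hb _), rfl⟩, fun n hn => ?_⟩
  have hn0 : (0:ℝ) < (n : ℝ) := by exact_mod_cast hn
  beta_reduce
  rw [Finset.sum_mul_sum,
    ← Equiv.sum_comp e (fun m => α' m * (n : ℝ) ^ (-(a' m))), Fintype.sum_prod_type]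
  refine Finset.sum_congr rfl fun i _ => Finset.sum_congr rfl fun j _ => ?_
  simp only [hα', ha', Equiv.symm_apply_apply]
  rw [neg_add, Real.rpow_add hn0]
  ring

lemma littleOhPoly_iff (x : ℕ → ℝ) :
    LittleOhPoly x ↔ ∃ p, PolyForm p ∧ (fun n => x n - p n) ∈ littleO := by
  constructor
  · rintro ⟨k, r, α, a, ha, h⟩
    set α' : Fin (k + 1) → ℝ := Fin.cons r α with hα'
    set a' : Fin (k + 1) → ℝ := Fin.cons (0:ℝ) a with ha'
    refine ⟨fun n => ∑ i, α' i * (n : ℝ) ^ (-(a' i)),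
      ⟨k + 1, α', a', ?_, rfl⟩, ?_⟩
    · intro i
      refine Fin.cases ?_ (fun i => ?_) i
      · simp [ha']
      · simp only [ha', Fin.cons_succ]; exact ha i
    · refine littleO_congr (f := fun n => x n - r - ∑ i, α i * (n : ℝ) ^ (-(a i)))
        (fun n _ => ?_) h
      beta_reduce
      rw [Fin.sum_univ_succ]
      simp [hα', ha', sub_sub]
  · rintro ⟨p, ⟨k, α, a, ha, rfl⟩, h⟩
    exact ⟨k, 0, α, a, ha, by simpa [sub_zero] using h⟩

theorem littleOhPoly_subring_of_bounded :
    (∀ x : ℕ → ℝ, LittleOhPoly x → ∃ C : ℝ, ∀ n, |x n| ≤ C) ∧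
    (∀ r : ℝ, LittleOhPoly (fun _ : ℕ => r)) ∧
    (∀ x y : ℕ → ℝ, LittleOhPoly x → LittleOhPoly y → LittleOhPoly (x + y)) ∧
    (∀ x : ℕ → ℝ, LittleOhPoly x → LittleOhPoly (-x)) ∧
    (∀ x y : ℕ → ℝ, LittleOhPoly x → LittleOhPoly y → LittleOhPoly (x * y)) := by
  refine ⟨?_, ?_, ?_, ?_, ?_⟩
  · intro x hx
    obtain ⟨p, hp, hf⟩ := (littleOhPoly_iff x).1 hx
    obtain ⟨C₁, h₁⟩ := polyForm_bdd hp
    obtain ⟨C₂, h₂⟩ := bdd_of_littleO hf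
    refine ⟨C₁ + C₂, fun n => ?_⟩
    have : x n = p n + (x n - p n) := by ring
    rw [this]
    calc |p n + (x n - p n)| ≤ |p n| + |x n - p n| := abs_add_le _ _
      _ ≤ C₁ + C₂ := add_le_add (h₁ n) (h₂ n)
  · intro r
    rw [littleOhPoly_iff]
    refine ⟨fun _ => r, polyForm_const r, ?_⟩
    simp only [sub_self, littleO, Set.mem_setOf_eq, mul_zero]
    exact tendsto_const_nhds
  · intro x y hx hy
    rw [littleOhPoly_iff] at *
    obtain ⟨p, hp, hf⟩ := hx
    obtain ⟨q, hq, hg⟩ := hy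
    refine ⟨fun n => p n + q n, polyForm_add hp hq, ?_⟩
    have := littleO_add hf hg
    refine littleO_congr (fun n _ => ?_) this
    simp [Pi.add_apply]
    ring
  · intro x hx
    rw [littleOhPoly_iff] at *
    obtain ⟨p, hp, hf⟩ := hx
    refine ⟨fun n => -p n, polyForm_neg hp, ?_⟩
    have := littleO_neg hf
    refine littleO_congr (fun n _ => ?_) this
    simp [Pi.neg_apply]
    ring
  · intro x y hx hy
    rw [littleOhPoly_iff] at *
    obtain ⟨p, hp, hf⟩ := hx
    obtain ⟨q, hq, hg⟩ := hy
    obtain ⟨w, hw, hpq⟩ := polyForm_mul hp hq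
    refine ⟨w, hw, ?_⟩
    obtain ⟨Cp, hCp⟩ := polyForm_bdd hp
    obtain ⟨Cq, hCq⟩ := polyForm_bdd hq
    obtain ⟨Cf, hCf⟩ := bdd_of_littleO hf
    -- x*y - w = p*(y - q) + (x - p)*q + (x - p)*(y - q) + (p*q - w)
    have t1 : (fun n => p n * (y n - q n)) ∈ littleO := littleO_bdd_mul hCp hg
    have t2 : (fun n => (x n - p n) * q n) ∈ littleO := by
      have : (fun n => q n * (x n - p n)) ∈ littleO := littleO_bdd_mul hCq hf
      refine littleO_congr (fun n _ => ?_) this; ring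
    have t3 : (fun n => (x n - p n) * (y n - q n)) ∈ littleO :=
      littleO_bdd_mul hCf hg
    have hsum := littleO_add (littleO_add t1 t2) t3
    refine littleO_congr (fun n hn => ?_) hsum
    have := hpq n hn
    simp [Pi.mul_apply]
    nlinarith [hpq n hn]
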